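/- Let φ ∈ (0, 1/2), c > 0, and let f₁ : [−π, π] → [0, ∞) be an even integrable function with f₁(ω) ≥ c|ω|^{2−2φ} for all ω ∈ [−π,π]. Define H(m) = (1/2π) ∫_{−π}^{π} cos(mω) f₁(ω) dω for integers m. Then there is a constant c₁ = c₁(c, φ) > 0 such that for every integer k ≥ 1, every choice of distinct integers j₁ < ... < j_k, and every b ∈ ℝ^k: Σ_{s=1}^{k} Σ_{t=1}^{k} b_s b_t H(j_s − j_t) ≥ c₁ k^{−(2−2φ)} Σ_{s=1}^{k} b_s². -/

import Mathlib

open Real MeasureTheory intervalIntegral Finset Set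

lemma aux_cos_int (m : ℤ) :
    (∫ ω in (-π)..π, Real.cos ((m : ℝ) * ω)) = if m = 0 then 2 * π else 0 := by
  rcases eq_or_ne m 0 with h | h
  · simp [h, two_mul]
  · have hm : (m : ℝ) ≠ 0 := Int.cast_ne_zero.mpr h
    have := intervalIntegral.integral_comp_mul_left (fun x => Real.cos x) (a := -π) (b := π) hm
    simp only [this]
    rw [integral_cos]
    have hs : Real.sin (π * m) = 0 := by rw [mul_comm]; exact Real.sin_int_mul_pi m
    simp only [mul_neg, Real.sin_neg, sub_neg_eq_add, mul_comm (m : ℝ) π, hs]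
    simp [h]

lemma aux_pointwise {k : ℕ} (j : Fin k → ℤ) (b : Fin k → ℝ) (ω : ℝ) :
    ∑ s, ∑ t, b s * b t * Real.cos (((j s - j t : ℤ) : ℝ) * ω)
      = (∑ s, b s * Real.cos ((j s : ℝ) * ω)) ^ 2
        + (∑ s, b s * Real.sin ((j s : ℝ) * ω)) ^ 2 := by
  rw [sq, sq, Finset.sum_mul_sum, Finset.sum_mul_sum, ← Finset.sum_add_distrib]
  refine Finset.sum_congr rfl fun s _ => ?_
  rw [← Finset.sum_add_distrib]
  refine Finset.sum_congr rfl fun t _ => ?_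
  push_cast
  rw [sub_mul, Real.cos_sub]
  ring

lemma aux_orth {k : ℕ} (j : Fin k → ℤ) (hj : Function.Injective j) (b : Fin k → ℝ) :
    (∫ ω in (-π)..π, ((∑ s, b s * Real.cos ((j s : ℝ) * ω)) ^ 2
        + (∑ s, b s * Real.sin ((j s : ℝ) * ω)) ^ 2))
      = 2 * π * ∑ s, (b s) ^ 2 := by
  have h1 : ∀ ω : ℝ, ((∑ s, b s * Real.cos ((j s : ℝ) * ω)) ^ 2
        + (∑ s, b s * Real.sin ((j s : ℝ) * ω)) ^ 2)
      = ∑ s, ∑ t, b s * b t * Real.cos (((j s - j t : ℤ) : ℝ) * ω) :=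
    fun ω => (aux_pointwise j b ω).symm
  simp only [h1]
  rw [intervalIntegral.integral_finset_sum]
  · have h2 : ∀ s : Fin k,
        (∫ ω in (-π)..π, ∑ t, b s * b t * Real.cos (((j s - j t : ℤ) : ℝ) * ω))
        = 2 * π * (b s) ^ 2 := by
      intro s
      rw [intervalIntegral.integral_finset_sum]
      · have h3 : ∀ t : Fin k,
            (∫ ω in (-π)..π, b s * b t * Real.cos (((j s - j t : ℤ) : ℝ) * ω))
            = if j s - j t = 0 then b s * b t * (2 * π) else 0 := by
          intro t
          rw [intervalIntegral.integral_const_mul, aux_cos_int]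
          split <;> simp
        simp only [h3]
        rw [Finset.sum_eq_single s]
        · simp [hj.eq_iff]; ring
        · intro t _ hts
          have : j s - j t ≠ 0 := sub_ne_zero.mpr (fun h => hts (hj h).symm)
          simp [this]
        · simp
      · intro t _
        exact (Continuous.intervalIntegrable (by continuity) _ _)
    simp only [h2]
    rw [← Finset.mul_sum]
  · intro s _
    apply Continuous.intervalIntegrable
    apply continuous_finset_sum
    intro t _
    continuity

/-- Let `φ ∈ (0,1/2)`, `c > 0`.  There is a constant `c₁ = c₁(c,φ) > 0`
such that for every even, nonnegative, integrable `f₁` on `[−π,π]` with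
`f₁(ω) ≥ c |ω|^{2−2φ}`, defining `H(m) = (1/2π) ∫_{−π}^{π} cos(mω) f₁(ω) dω`, for every
`k ≥ 1`, distinct integers `j₁ < ... < j_k` and `b ∈ ℝ^k`:
`Σ_s Σ_t b_s b_t H(j_s − j_t) ≥ c₁ k^{−(2−2φ)} Σ_s b_s²`. -/
theorem stmt_12 (φ c : ℝ) (hφ1 : 0 < φ) (hφ2 : φ < 1 / 2) (hc : 0 < c) :
    ∃ c₁ > 0, ∀ f₁ : ℝ → ℝ,
      (∀ ω ∈ Set.Icc (-Real.pi) Real.pi, 0 ≤ f₁ ω) →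
      (∀ ω ∈ Set.Icc (-Real.pi) Real.pi, f₁ (-ω) = f₁ ω) →
      MeasureTheory.IntegrableOn f₁ (Set.Icc (-Real.pi) Real.pi) →
      (∀ ω ∈ Set.Icc (-Real.pi) Real.pi, c * |ω| ^ (2 - 2 * φ) ≤ f₁ ω) →
      ∀ k : ℕ, 1 ≤ k → ∀ j : Fin k → ℤ, StrictMono j → ∀ b : Fin k → ℝ,
        c₁ * (k : ℝ) ^ (-(2 - 2 * φ)) * ∑ s, (b s) ^ 2 ≤
          ∑ s, ∑ t, b s * b t *
            ((1 / (2 * Real.pi)) *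
              ∫ ω in (-Real.pi)..Real.pi, Real.cos (((j s - j t : ℤ) : ℝ) * ω) * f₁ ω) := by
  have hπ : (0 : ℝ) < π := Real.pi_pos
  set α : ℝ := 2 - 2 * φ with hα
  have hα0 : 0 < α := by simp only [hα]; linarith
  have hc₁pos : 0 < c / 2 * (π / 2) ^ α := by positivity
  refine ⟨c / 2 * (π / 2) ^ α, hc₁pos, ?_⟩
  intro f₁ hpos _heven hint hlow k hk j hjmono b
  have hj : Function.Injective j := hjmono.injective
  have hk0 : (0 : ℝ) < (k : ℝ) := by exact_mod_cast hk
  set B : ℝ := ∑ s, (b s) ^ 2 with hB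
  have hB0 : 0 ≤ B := Finset.sum_nonneg fun s _ => sq_nonneg _
  set g : ℝ → ℝ := fun ω => (∑ s, b s * Real.cos ((j s : ℝ) * ω)) ^ 2
      + (∑ s, b s * Real.sin ((j s : ℝ) * ω)) ^ 2 with hgdef
  have hg_cont : Continuous g := by
    refine Continuous.add (Continuous.pow ?_ 2) (Continuous.pow ?_ 2) <;>
      refine continuous_finset_sum _ fun t _ => Continuous.mul continuous_const ?_
    · exact Real.continuous_cos.comp (continuous_const.mul continuous_id)
    · exact Real.continuous_sin.comp (continuous_const.mul continuous_id)
  have hg_nonneg : ∀ ω, 0 ≤ g ω := fun ω => by positivity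
  have hg_le : ∀ ω, g ω ≤ (k : ℝ) * B := by
    intro ω
    have h1 := Finset.sum_mul_sq_le_sq_mul_sq Finset.univ b (fun s => Real.cos ((j s : ℝ) * ω))
    have h2 := Finset.sum_mul_sq_le_sq_mul_sq Finset.univ b (fun s => Real.sin ((j s : ℝ) * ω))
    have h3 : (∑ s, (Real.cos ((j s : ℝ) * ω)) ^ 2) + (∑ s, (Real.sin ((j s : ℝ) * ω)) ^ 2)
        = (k : ℝ) := by
      rw [← Finset.sum_add_distrib]
      have : ∀ s : Fin k, (Real.cos ((j s : ℝ) * ω)) ^ 2 + (Real.sin ((j s : ℝ) * ω)) ^ 2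
          = 1 := fun s => by rw [add_comm]; exact Real.sin_sq_add_cos_sq _
      simp [this]
    calc g ω ≤ B * (∑ s, (Real.cos ((j s : ℝ) * ω)) ^ 2)
          + B * (∑ s, (Real.sin ((j s : ℝ) * ω)) ^ 2) := add_le_add h1 h2
      _ = (k : ℝ) * B := by rw [← mul_add, h3]; ring
  -- interval integrability of bounded continuous * f₁
  have hmul : ∀ h : ℝ → ℝ, Continuous h → (∃ C, ∀ x, ‖h x‖ ≤ C) →
      IntegrableOn (fun ω => h ω * f₁ ω) (Set.Ioc (-π) π) volume := by
    intro h hcont hbd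
    exact (hint.mono_set Set.Ioc_subset_Icc_self).bdd_mul hcont.aestronglyMeasurable (Filter.Eventually.of_forall hbd.choose_spec)
  have hGF : IntegrableOn (fun ω => g ω * f₁ ω) (Set.Ioc (-π) π) volume := by
    refine hmul g hg_cont ⟨(k : ℝ) * B, fun x => ?_⟩
    rw [Real.norm_eq_abs, abs_of_nonneg (hg_nonneg x)]
    exact hg_le x
  -- the LHS double sum equals (1/(2π)) ∫ g f₁
  have key : ∑ s, ∑ t, b s * b t *
        ((1 / (2 * π)) * ∫ ω in (-π)..π, Real.cos (((j s - j t : ℤ) : ℝ) * ω) * f₁ ω)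
      = (1 / (2 * π)) * ∫ ω in (-π)..π, g ω * f₁ ω := by
    have hIab : ∀ s t : Fin k, IntervalIntegrable
        (fun ω => b s * b t * Real.cos (((j s - j t : ℤ) : ℝ) * ω) * f₁ ω) volume (-π) π := by
      intro s t
      rw [intervalIntegrable_iff_integrableOn_Ioc_of_le (by linarith)]
      refine hmul (fun ω => b s * b t * Real.cos (((j s - j t : ℤ) : ℝ) * ω))
        (continuous_const.mul (Real.continuous_cos.comp (continuous_const.mul continuous_id)))
        ⟨|b s * b t|, fun x => ?_⟩
      rw [Real.norm_eq_abs, abs_mul]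
      exact mul_le_of_le_one_right (abs_nonneg _) (abs_cos_le_one _)
    have step1 : ∀ s t : Fin k, b s * b t *
          ((1 / (2 * π)) * ∫ ω in (-π)..π, Real.cos (((j s - j t : ℤ) : ℝ) * ω) * f₁ ω)
        = (1 / (2 * π)) *
          ∫ ω in (-π)..π, b s * b t * Real.cos (((j s - j t : ℤ) : ℝ) * ω) * f₁ ω := by
      intro s t
      rw [show (fun ω => b s * b t * Real.cos (((j s - j t : ℤ) : ℝ) * ω) * f₁ ω)
          = (fun ω => b s * b t * (Real.cos (((j s - j t : ℤ) : ℝ) * ω) * f₁ ω)) by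
          funext ω; ring]
      rw [intervalIntegral.integral_const_mul]
      ring
    simp only [step1]
    simp only [← Finset.mul_sum]
    congr 1
    have e1 : ∀ s : Fin k,
        (∑ t, ∫ ω in (-π)..π, b s * b t * Real.cos (((j s - j t : ℤ) : ℝ) * ω) * f₁ ω)
        = ∫ ω in (-π)..π, ∑ t, b s * b t * Real.cos (((j s - j t : ℤ) : ℝ) * ω) * f₁ ω :=
      fun s => (intervalIntegral.integral_finset_sum (fun t _ => hIab s t)).symm
    simp only [e1]
    have hsum_int : ∀ s : Fin k, IntervalIntegrable
        (fun ω => ∑ t, b s * b t * Real.cos (((j s - j t : ℤ) : ℝ) * ω) * f₁ ω)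
        volume (-π) π := by
      intro s
      have h := IntervalIntegrable.sum Finset.univ (fun t (_ : t ∈ Finset.univ) => hIab s t)
      have he : (∑ t : Fin k, fun ω => b s * b t * Real.cos (((j s - j t : ℤ) : ℝ) * ω) * f₁ ω)
          = fun ω => ∑ t, b s * b t * Real.cos (((j s - j t : ℤ) : ℝ) * ω) * f₁ ω := by
        funext ω; simp
      rwa [he] at h
    rw [← intervalIntegral.integral_finset_sum (fun s _ => hsum_int s)]
    refine intervalIntegral.integral_congr fun ω _ => ?_
    simp only [← Finset.sum_mul]
    rw [aux_pointwise j b ω]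
  rw [key]
  -- now the analytic lower bound
  set δ : ℝ := π / (2 * k) with hδdef
  have hδ0 : 0 < δ := by positivity
  have hδπ : δ < π := by
    rw [hδdef, div_lt_iff₀ (by positivity)]
    have hk1 : (1 : ℝ) ≤ (k : ℝ) := by exact_mod_cast hk
    nlinarith
  have hIoc : ∫ ω in (-π)..π, g ω * f₁ ω = ∫ ω in Set.Ioc (-π) π, g ω * f₁ ω :=
    intervalIntegral.integral_of_le (by linarith)
  set T : Set ℝ := Set.Icc (-δ) δ with hTdef
  have hTsub : T ⊆ Set.Ioc (-π) π := fun x hx =>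
    ⟨by linarith [hx.1], by linarith [hx.2]⟩
  set S : Set ℝ := Set.Ioc (-π) π \ T with hSdef
  have hg_int : IntegrableOn g (Set.Ioc (-π) π) volume :=
    (hg_cont.integrableOn_Icc).mono_set Set.Ioc_subset_Icc_self
  -- ∫_I g = 2π B
  have hIg : ∫ ω in Set.Ioc (-π) π, g ω = 2 * π * B := by
    rw [← intervalIntegral.integral_of_le (by linarith : -π ≤ π)]
    exact aux_orth j hj b
  -- ∫_T g ≤ π B
  have hTg : ∫ ω in T, g ω ≤ π * B := by
    have h1 : ∫ ω in T, g ω ≤ ∫ _ω in T, (k : ℝ) * B := by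
      refine setIntegral_mono_on (hg_int.mono_set hTsub)
        ((integrableOn_const_iff).mpr (Or.inr (by rw [hTdef]; exact measure_Icc_lt_top))
          ) measurableSet_Icc (fun x _ => hg_le x)
    have h2 : ∫ _ω in T, (k : ℝ) * B = 2 * δ * ((k : ℝ) * B) := by
      rw [setIntegral_const, hTdef, Real.volume_real_Icc, smul_eq_mul,
        max_eq_left (by linarith)]
      ring
    have h3 : 2 * δ * (k : ℝ) = π := by
      rw [hδdef]; field_simp
    calc ∫ ω in T, g ω ≤ 2 * δ * ((k : ℝ) * B) := h1.trans_eq h2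
      _ = π * B := by rw [← mul_assoc, h3]
  -- ∫_S g ≥ π B
  have hSg : π * B ≤ ∫ ω in S, g ω := by
    have := MeasureTheory.integral_diff measurableSet_Icc hg_int hTsub (f := g)
    rw [hSdef, this, hIg]
    linarith
  -- pointwise on S : c δ^α * g ≤ g * f₁
  have hSpt : ∀ ω ∈ S, c * δ ^ α * g ω ≤ g ω * f₁ ω := by
    intro ω hω
    have hωI : ω ∈ Set.Icc (-π) π := Set.Ioc_subset_Icc_self hω.1
    have hωδ : δ ≤ |ω| := by
      rcases hω with ⟨_, hnot⟩
      rw [hTdef, Set.mem_Icc, not_and_or, not_le, not_le] at hnot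
      rcases hnot with h | h
      · calc δ ≤ -ω := by linarith
          _ ≤ |ω| := neg_le_abs ω
      · exact h.le.trans (le_abs_self ω)
    have h1 : c * δ ^ α ≤ c * |ω| ^ α :=
      mul_le_mul_of_nonneg_left (Real.rpow_le_rpow hδ0.le hωδ hα0.le) hc.le
    have h2 : c * |ω| ^ α ≤ f₁ ω := hlow ω hωI
    calc c * δ ^ α * g ω ≤ f₁ ω * g ω :=
        mul_le_mul_of_nonneg_right (h1.trans h2) (hg_nonneg ω)
      _ = g ω * f₁ ω := mul_comm _ _
  have hSmeas : MeasurableSet S := measurableSet_Ioc.diff measurableSet_Icc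
  -- ∫_S g f₁ ≥ c δ^α π B
  have hSgf : c * δ ^ α * (π * B) ≤ ∫ ω in S, g ω * f₁ ω := by
    have h1 : ∫ ω in S, c * δ ^ α * g ω ≤ ∫ ω in S, g ω * f₁ ω := by
      refine setIntegral_mono_on
        ((hg_int.mono_set Set.diff_subset).const_mul _)
        (hGF.mono_set Set.diff_subset) hSmeas hSpt
    have h2 : ∫ ω in S, c * δ ^ α * g ω = c * δ ^ α * ∫ ω in S, g ω :=
      MeasureTheory.integral_const_mul _ _
    have h3 : c * δ ^ α * (π * B) ≤ c * δ ^ α * ∫ ω in S, g ω :=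
      mul_le_mul_of_nonneg_left hSg (by positivity)
    linarith
  -- ∫_I g f₁ ≥ ∫_S g f₁
  have hmono : ∫ ω in S, g ω * f₁ ω ≤ ∫ ω in Set.Ioc (-π) π, g ω * f₁ ω := by
    refine setIntegral_mono_set hGF ?_ (HasSubset.Subset.eventuallyLE Set.diff_subset)
    refine (ae_restrict_iff' measurableSet_Ioc).mpr (Filter.Eventually.of_forall ?_)
    intro ω hω
    exact mul_nonneg (hg_nonneg ω) (hpos ω (Set.Ioc_subset_Icc_self hω))
  -- put everything together
  have hfinal : c * δ ^ α * (π * B) ≤ ∫ ω in (-π)..π, g ω * f₁ ω := by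
    rw [hIoc]; linarith
  have hδα : δ ^ α = (π / 2) ^ α * (k : ℝ) ^ (-α) := by
    rw [hδdef, show π / (2 * (k : ℝ)) = (π / 2) * ((k : ℝ))⁻¹ by ring,
      Real.mul_rpow (by positivity) (by positivity),
      ← Real.rpow_neg_one ((k : ℝ)), ← Real.rpow_mul hk0.le]
    norm_num
  calc c / 2 * (π / 2) ^ α * (k : ℝ) ^ (-α) * B
      = 1 / (2 * π) * (c * ((π / 2) ^ α * (k : ℝ) ^ (-α)) * (π * B)) := by
        field_simp
    _ = 1 / (2 * π) * (c * δ ^ α * (π * B)) := by rw [hδα]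
    _ ≤ 1 / (2 * π) * ∫ ω in (-π)..π, g ω * f₁ ω :=
        mul_le_mul_of_nonneg_left hfinal (by positivity)
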